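/- arXiv:2102.04863 — 2 statements merged into one kernel-verified Lean document; each statement's English description precedes it below -/
import Mathlib

section
/- The pre-processed improvement M_{λ,φ}(Θ) := max_{Φ∈DI} ||Δ Θ Φ (λ − μΛ_φ)||_1 − |λ−μ| is non-negative for every quantum channel Θ. -/
open Matrix Complex
open scoped ComplexOrder

/-- A superoperator: a ℂ-linear map from operators on `ι` to operators on `κ`. -/
abbrev SO (ι κ : Type*) [Fintype ι] [DecidableEq ι] [Fintype κ] [DecidableEq κ] :=
  Matrix ι ι ℂ →ₗ[ℂ] Matrix κ κ ℂ

/-- Choi matrix of a superoperator. -/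
noncomputable def choi {ι κ : Type*} [Fintype ι] [DecidableEq ι] [Fintype κ] [DecidableEq κ]
    (Θ : SO ι κ) : Matrix (κ × ι) (κ × ι) ℂ :=
  Matrix.of fun p q => Θ (Matrix.single p.2 q.2 1) p.1 q.1

/-- A quantum state: positive semidefinite with unit trace. -/
def IsState {ι : Type*} [Fintype ι] (ρ : Matrix ι ι ℂ) : Prop := ρ.PosSemidef ∧ ρ.trace = 1

/-- A quantum channel: completely positive (PSD Choi matrix) and trace preserving. -/
def IsChannel {ι κ : Type*} [Fintype ι] [DecidableEq ι] [Fintype κ] [DecidableEq κ]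
    (Θ : SO ι κ) : Prop :=
  (choi Θ).PosSemidef ∧ ∀ ρ, (Θ ρ).trace = ρ.trace

/-- Total dephasing channel in the fixed incoherent basis. -/
noncomputable def deph {ι : Type*} [Fintype ι] [DecidableEq ι] : SO ι ι where
  toFun ρ := Matrix.of fun i j => if i = j then ρ i j else 0
  map_add' := by
    intro x y; ext i j
    by_cases h : i = j <;> simp [h]
  map_smul' := by
    intro c x; ext i j
    by_cases h : i = j <;> simp [h]

/-- Phase-encoding unitary channel `Λ_φ`. -/
noncomputable def phaseCh {ι : Type*} [Fintype ι] [DecidableEq ι] (φ : ι → ℝ) : SO ι ι where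
  toFun ρ := Matrix.of fun i j => Complex.exp (Complex.I * ((φ i : ℂ) - (φ j : ℂ))) * ρ i j
  map_add' := by
    intro x y; ext i j; simp [mul_add]
  map_smul' := by
    intro c x; ext i j; simp; ring

/-- The superoperator `λ·id − (1−λ)·Λ_φ`. -/
noncomputable def diffOp {ι : Type*} [Fintype ι] [DecidableEq ι] (lam : ℝ) (φ : ι → ℝ) :
    SO ι ι :=
  (lam : ℂ) • LinearMap.id - ((1 - lam : ℝ) : ℂ) • phaseCh φ

/-- Trace norm of a matrix: sum of singular values. -/
noncomputable def traceNorm {ι : Type*} [Fintype ι] [DecidableEq ι]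
    (M : Matrix ι ι ℂ) : ℝ :=
  ∑ i, Real.sqrt ((Matrix.isHermitian_conjTranspose_mul_self M).eigenvalues i)

/-- `Θ ⊗ id` acting on a composite system. -/
noncomputable def tensorId {ι κ ν : Type*} [Fintype ι] [DecidableEq ι] [Fintype κ]
    [DecidableEq κ] [Fintype ν] [DecidableEq ν] (Θ : SO ι κ) : SO (ι × ν) (κ × ν) where
  toFun ρ := Matrix.of fun p q =>
    ∑ i, ∑ j, Θ (Matrix.single i j 1) p.1 q.1 * ρ (i, p.2) (j, q.2)
  map_add' := by
    intro x y; ext p q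
    simp [Matrix.add_apply, mul_add, Finset.sum_add_distrib]
  map_smul' := by
    intro c x; ext p q
    simp only [Matrix.of_apply, Matrix.smul_apply, smul_eq_mul, RingHom.id_apply,
      Finset.mul_sum]
    exact Finset.sum_congr rfl fun i _ => Finset.sum_congr rfl fun j _ => by ring

/-- Detection incoherent channels: `Δ Φ = Δ Φ Δ`. -/
def IsDI {ι κ : Type*} [Fintype ι] [DecidableEq ι] [Fintype κ] [DecidableEq κ]
    (Φ : SO ι κ) : Prop :=
  deph ∘ₗ Φ = deph ∘ₗ Φ ∘ₗ deph

/-- Maximally incoherent channels: `Ψ Δ = Δ Ψ Δ`. -/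
def IsMIO {ι κ : Type*} [Fintype ι] [DecidableEq ι] [Fintype κ] [DecidableEq κ]
    (Ψ : SO ι κ) : Prop :=
  Ψ ∘ₗ deph = deph ∘ₗ Ψ ∘ₗ deph

/-- The pre-processed improvement `M_{λ,φ}(Θ)`. -/
noncomputable def Mpre {α β γ : Type*} [Fintype α] [DecidableEq α] [Fintype β] [DecidableEq β]
    [Fintype γ] [DecidableEq γ] (lam : ℝ) (φ : α → ℝ) (Θ : SO β γ) : ℝ :=
  sSup {x : ℝ | ∃ (Φ : SO α β) (ρ : Matrix α α ℂ), IsChannel Φ ∧ IsDI Φ ∧ IsState ρ ∧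
    x = traceNorm (deph (Θ (Φ (diffOp lam φ ρ))))} - |lam - (1 - lam)|

/-- The post-processed improvement `N_{λ,φ}(Θ)`. -/
noncomputable def Npost {α β γ : Type*} [Fintype α] [DecidableEq α] [Fintype β] [DecidableEq β]
    [Fintype γ] [DecidableEq γ] (lam : ℝ) (φ : γ → ℝ) (Θ : SO α β) : ℝ :=
  sSup {x : ℝ | ∃ (Ψ : SO β γ) (ρ : Matrix α α ℂ), IsChannel Ψ ∧ IsMIO Ψ ∧ IsState ρ ∧
    x = traceNorm (diffOp lam φ (Ψ (Θ (deph ρ))))} - |lam - (1 - lam)|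

section Aux

open Matrix

variable {ι κ : Type*} [Fintype ι] [DecidableEq ι] [Fintype κ] [DecidableEq κ]

lemma so_apply (Θ : SO ι κ) (ρ : Matrix ι ι ℂ) (p q : κ) :
    Θ ρ p q = ∑ i, ∑ j, ρ i j * choi Θ (p, i) (q, j) := by
  have h : ρ = ∑ i, ∑ j, ρ i j • Matrix.single i j (1:ℂ) := by
    conv_lhs => rw [Matrix.matrix_eq_sum_single ρ]
    refine Finset.sum_congr rfl fun i _ => Finset.sum_congr rfl fun j _ => ?_
    ext a b; simp [Matrix.single]
  conv_lhs => rw [h]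
  rw [map_sum]
  simp only [map_sum, _root_.map_smul, Matrix.sum_apply, Matrix.smul_apply, smul_eq_mul]
  rfl

lemma quad_eq (Θ : SO ι κ) (v : ι → ℂ) (x : κ → ℂ) :
    dotProduct (star x) (Θ (Matrix.vecMulVec (star v) v) *ᵥ x)
      = dotProduct (star fun pi : κ × ι => x pi.1 * v pi.2)
          (choi Θ *ᵥ fun pi : κ × ι => x pi.1 * v pi.2) := by
  simp only [dotProduct, Matrix.mulVec, so_apply, Matrix.vecMulVec_apply,
    Pi.star_apply, RCLike.star_def, _root_.map_mul, Finset.mul_sum, Finset.sum_mul,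
    Fintype.sum_prod_type]
  refine Finset.sum_congr rfl fun p _ => ?_
  rw [Finset.sum_comm]
  refine Finset.sum_congr rfl fun i _ => Finset.sum_congr rfl fun q _ =>
    Finset.sum_congr rfl fun j _ => ?_
  ring

lemma channel_psd (Θ : SO ι κ) (hC : (choi Θ).PosSemidef) {ρ : Matrix ι ι ℂ}
    (hρ : ρ.PosSemidef) : (Θ ρ).PosSemidef := by
  have hCh : ∀ (a b : κ × ι), (starRingEnd ℂ) (choi Θ b a) = choi Θ a b := by
    intro a b
    conv_rhs => rw [← hC.1]
    simp [Matrix.conjTranspose_apply]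
  have hρh : ∀ i j, (starRingEnd ℂ) (ρ j i) = ρ i j := by
    intro i j
    conv_rhs => rw [← hρ.1]
    simp [Matrix.conjTranspose_apply]
  refine Matrix.PosSemidef.of_dotProduct_mulVec_nonneg ?_ ?_
  · ext p q
    rw [Matrix.conjTranspose_apply, so_apply, so_apply]
    simp only [star_sum, star_mul', RCLike.star_def, hρh, hCh]
    exact Finset.sum_comm
  · intro x
    obtain ⟨m, v, hv⟩ := Matrix.posSemidef_iff_eq_sum_vecMulVec.mp hρ
    set B : Fin m → ι → ℂ := fun k => star (v k) with hBdef
    have hρsum : ρ = ∑ k, Matrix.vecMulVec (star (B k)) (B k) := by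
      rw [hv]
      simp [B]
    have hmv : (∑ k, Θ (Matrix.vecMulVec (star (B k)) (B k))) *ᵥ x
        = ∑ k, (Θ (Matrix.vecMulVec (star (B k)) (B k))) *ᵥ x := by
      ext p
      simp only [Matrix.mulVec, dotProduct, Matrix.sum_apply, Finset.sum_apply,
        Finset.sum_mul]
      exact Finset.sum_comm
    have hds : dotProduct (star x) (∑ k, (Θ (Matrix.vecMulVec (star (B k)) (B k))) *ᵥ x)
        = ∑ k, dotProduct (star x) ((Θ (Matrix.vecMulVec (star (B k)) (B k))) *ᵥ x) := by
      simp only [dotProduct, Finset.sum_apply, Finset.mul_sum]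
      exact Finset.sum_comm
    rw [hρsum, map_sum, hmv, hds]
    exact Finset.sum_nonneg fun k _ => by rw [quad_eq]; exact hC.dotProduct_mulVec_nonneg _

lemma psd_diag_nonneg {A : Matrix ι ι ℂ} (hA : A.PosSemidef) (i : ι) : 0 ≤ A i i := by
  have h := hA.dotProduct_mulVec_nonneg (Pi.single i 1)
  simpa [dotProduct, Matrix.mulVec, Pi.single_apply, Finset.sum_ite_eq,
    Finset.sum_ite_eq'] using h

lemma deph_eq (σ : Matrix ι ι ℂ) : deph σ = Matrix.diagonal (fun i => σ i i) := by
  ext i j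
  by_cases h : i = j <;> simp [deph, Matrix.diagonal, h]

lemma trace_deph (σ : Matrix ι ι ℂ) : (deph σ : Matrix ι ι ℂ).trace = σ.trace := by
  simp [deph_eq, Matrix.trace_diagonal, Matrix.trace]

lemma trace_phaseCh (φ : ι → ℝ) (σ : Matrix ι ι ℂ) :
    (phaseCh φ σ : Matrix ι ι ℂ).trace = σ.trace := by
  simp [phaseCh, Matrix.trace, Matrix.diag]

lemma phaseCh_psd (φ : ι → ℝ) {ρ : Matrix ι ι ℂ} (hρ : ρ.PosSemidef) :
    (phaseCh φ ρ : Matrix ι ι ℂ).PosSemidef := by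
  have hherm : ∀ i j, (starRingEnd ℂ) (ρ j i) = ρ i j := by
    intro i j
    conv_rhs => rw [← hρ.1]
    simp [Matrix.conjTranspose_apply]
  refine Matrix.PosSemidef.of_dotProduct_mulVec_nonneg ?_ ?_
  · ext i j
    simp only [Matrix.conjTranspose_apply, phaseCh, LinearMap.coe_mk, AddHom.coe_mk,
      Matrix.of_apply, RCLike.star_def, _root_.map_mul, ← Complex.exp_conj, map_sub,
      Complex.conj_I, Complex.conj_ofReal, hherm, neg_mul]
    rw [show -(Complex.I * ((φ j : ℂ) - (φ i : ℂ)))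
        = Complex.I * ((φ i : ℂ) - (φ j : ℂ)) by ring]
  · intro x
    have key : dotProduct (star x) ((phaseCh φ ρ : Matrix ι ι ℂ) *ᵥ x)
        = dotProduct (star (fun i => Complex.exp (-(Complex.I * (φ i : ℂ))) * x i))
            (ρ *ᵥ (fun i => Complex.exp (-(Complex.I * (φ i : ℂ))) * x i)) := by
      simp only [dotProduct, Matrix.mulVec, Pi.star_apply, RCLike.star_def, _root_.map_mul,
        ← Complex.exp_conj, map_neg, Complex.conj_I, Complex.conj_ofReal, phaseCh,
        LinearMap.coe_mk, AddHom.coe_mk, Matrix.of_apply]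
      refine Finset.sum_congr rfl fun i _ => ?_
      rw [Finset.mul_sum, Finset.mul_sum]
      refine Finset.sum_congr rfl fun j _ => ?_
      rw [show Complex.I * ((φ i : ℂ) - (φ j : ℂ))
          = Complex.I * (φ i : ℂ) + -(Complex.I * (φ j : ℂ)) by ring, Complex.exp_add,
        show -(-Complex.I * (φ i : ℂ)) = Complex.I * (φ i : ℂ) by ring]
      ring
    rw [key]
    exact hρ.dotProduct_mulVec_nonneg _

lemma traceNorm_diagonal (m : ι → ℂ) :
    traceNorm (Matrix.diagonal m) = ∑ i, ‖m i‖ := by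
  have hA := Matrix.isHermitian_conjTranspose_mul_self (Matrix.diagonal m)
  have hd : (Matrix.diagonal m)ᴴ * Matrix.diagonal m
      = Matrix.diagonal (fun i => ((‖m i‖ ^ 2 : ℝ) : ℂ)) := by
    rw [Matrix.diagonal_conjTranspose, Matrix.diagonal_mul_diagonal]
    refine congrArg Matrix.diagonal (funext fun i => ?_)
    simp only [Pi.star_apply, RCLike.star_def]
    rw [mul_comm, Complex.mul_conj, Complex.normSq_eq_norm_sq]
  have h1 : ((Matrix.diagonal m)ᴴ * Matrix.diagonal m).charpoly.roots
      = Multiset.map (fun i => ((‖m i‖ ^ 2 : ℝ) : ℂ)) Finset.univ.val := by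
    rw [hd, Matrix.charpoly_diagonal, Polynomial.roots_prod _ _
      (Finset.prod_ne_zero_iff.mpr fun i _ => Polynomial.X_sub_C_ne_zero _)]
    simp only [Polynomial.roots_X_sub_C]
    exact Multiset.bind_singleton _ _
  have hroots := hA.roots_charpoly_eq_eigenvalues
  rw [h1] at hroots
  have h2 := congrArg (fun s : Multiset ℂ => (s.map (fun z => Real.sqrt z.re)).sum) hroots
  simp only [Multiset.map_map, Function.comp_def, Complex.ofReal_re] at h2
  unfold traceNorm
  rw [Finset.sum_eq_multiset_sum, Finset.sum_eq_multiset_sum]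
  have h3 : (Multiset.map (fun x => Real.sqrt (hA.eigenvalues x)) Finset.univ.val).sum
      = (Multiset.map (fun x => Real.sqrt (‖m x‖ ^ 2)) Finset.univ.val).sum := h2.symm
  refine h3.trans ?_
  congr 1
  refine Multiset.map_congr rfl fun i _ => ?_
  exact Real.sqrt_sq (norm_nonneg _)

end Aux
section Aux2

open Matrix

variable {ι κ : Type*} [Fintype ι] [DecidableEq ι] [Fintype κ] [DecidableEq κ]

lemma stdBasis_psd (i0 : ι) : (Matrix.single i0 i0 (1:ℂ)).PosSemidef := by
  refine Matrix.PosSemidef.of_dotProduct_mulVec_nonneg ?_ ?_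
  · ext p q
    simp [Matrix.single, Matrix.conjTranspose_apply,
      apply_ite (starRingEnd ℂ), and_comm]
  · intro y
    have h : dotProduct (star y) (Matrix.single i0 i0 (1:ℂ) *ᵥ y)
        = star (y i0) * y i0 := by
      simp [dotProduct, Matrix.mulVec, Matrix.single, Matrix.of_apply,
        ite_and, Finset.sum_ite_eq, Finset.sum_ite_eq']
    rw [h]
    exact star_mul_self_nonneg _

lemma stdBasis_trace (i0 : ι) : (Matrix.single i0 i0 (1:ℂ)).trace = 1 := by
  simp [Matrix.trace, Matrix.diag, Matrix.single, ite_and, Finset.sum_ite_eq]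

lemma psd_diag_re {A : Matrix ι ι ℂ} (hA : A.PosSemidef) (i : ι) :
    ‖A i i‖ = (A i i).re := by
  have h := psd_diag_nonneg hA i
  rw [Complex.le_def] at h
  simp only [Complex.zero_re, Complex.zero_im] at h
  rw [Complex.norm_def, Complex.normSq_apply, ← h.2, mul_zero, add_zero,
    Real.sqrt_mul_self h.1]

end Aux2
/-- non-negativity of the pre-processed improvement. -/
theorem Mpre_nonneg {α β γ : Type*} [Fintype α] [DecidableEq α] [Nonempty α]
    [Fintype β] [DecidableEq β] [Nonempty β] [Fintype γ] [DecidableEq γ] [Nonempty γ]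
    (lam : ℝ) (hlam : lam ∈ Set.Icc (0 : ℝ) 1) (φ : α → ℝ)
    (Θ : SO β γ) (hΘ : IsChannel Θ) :
    0 ≤ Mpre lam φ Θ := by
  classical
  obtain ⟨hl0, hl1⟩ := hlam
  set S : Set ℝ := {x : ℝ | ∃ (Φ : SO α β) (ρ : Matrix α α ℂ), IsChannel Φ ∧ IsDI Φ ∧
    IsState ρ ∧ x = traceNorm (deph (Θ (Φ (diffOp lam φ ρ))))} with hS
  -- upper bound on S
  have hub : ∀ x ∈ S, x ≤ 1 := by
    rintro x ⟨Φ, ρ, hΦ, hDI, hρ, rfl⟩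
    set σ1 : Matrix γ γ ℂ := Θ (Φ ρ) with hσ1def
    set σ2 : Matrix γ γ ℂ := Θ (Φ (phaseCh φ ρ)) with hσ2def
    have hσ1 : σ1.PosSemidef := channel_psd Θ hΘ.1 (channel_psd Φ hΦ.1 hρ.1)
    have hσ2 : σ2.PosSemidef :=
      channel_psd Θ hΘ.1 (channel_psd Φ hΦ.1 (phaseCh_psd φ hρ.1))
    have ht1 : σ1.trace = 1 := by rw [hσ1def, hΘ.2, hΦ.2, hρ.2]
    have ht2 : σ2.trace = 1 := by rw [hσ2def, hΘ.2, hΦ.2, trace_phaseCh, hρ.2]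
    have hmat : Θ (Φ (diffOp lam φ ρ))
        = (lam : ℂ) • σ1 - ((1 - lam : ℝ) : ℂ) • σ2 := by
      rw [diffOp]
      simp only [LinearMap.sub_apply, LinearMap.smul_apply, LinearMap.id_apply,
        map_sub, _root_.map_smul]
      rfl
    have hdep : deph (Θ (Φ (diffOp lam φ ρ)))
        = Matrix.diagonal (fun i => (lam : ℂ) * σ1 i i - ((1 - lam : ℝ) : ℂ) * σ2 i i) := by
      rw [deph_eq, hmat]
      refine congrArg Matrix.diagonal (funext fun i => ?_)
      simp
    rw [hdep, traceNorm_diagonal]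
    have hbound : ∀ i, ‖(lam : ℂ) * σ1 i i - ((1 - lam : ℝ) : ℂ) * σ2 i i‖
        ≤ lam * (σ1 i i).re + (1 - lam) * (σ2 i i).re := by
      intro i
      calc ‖(lam : ℂ) * σ1 i i - ((1 - lam : ℝ) : ℂ) * σ2 i i‖
          ≤ ‖(lam : ℂ) * σ1 i i‖ + ‖((1 - lam : ℝ) : ℂ) * σ2 i i‖ := by
            simpa [sub_eq_add_neg] using
              norm_add_le ((lam : ℂ) * σ1 i i) (-(((1 - lam : ℝ) : ℂ) * σ2 i i))
        _ = lam * (σ1 i i).re + (1 - lam) * (σ2 i i).re := by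
            rw [norm_mul, norm_mul, Complex.norm_real, Complex.norm_real, Real.norm_eq_abs, Real.norm_eq_abs,
              psd_diag_re hσ1, psd_diag_re hσ2, _root_.abs_of_nonneg hl0,
              _root_.abs_of_nonneg (by linarith : (0:ℝ) ≤ 1 - lam)]
    calc ∑ i, ‖(lam : ℂ) * σ1 i i - ((1 - lam : ℝ) : ℂ) * σ2 i i‖
        ≤ ∑ i, (lam * (σ1 i i).re + (1 - lam) * (σ2 i i).re) :=
          Finset.sum_le_sum fun i _ => hbound i
      _ = lam * (σ1.trace).re + (1 - lam) * (σ2.trace).re := by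
          rw [Finset.sum_add_distrib, ← Finset.mul_sum, ← Finset.mul_sum]
          simp [Matrix.trace, Matrix.diag, Complex.re_sum]
      _ = 1 := by rw [ht1, ht2]; norm_num
  -- the witness
  set a0 : α := Classical.arbitrary α with ha0
  set b0 : β := Classical.arbitrary β with hb0
  set P : Matrix β β ℂ := Matrix.single b0 b0 1 with hPdef
  set ρ0 : Matrix α α ℂ := Matrix.single a0 a0 1 with hρ0def
  set Φ0 : SO α β := (Matrix.traceLinearMap α ℂ ℂ).smulRight P with hΦ0def
  have hΦ0app : ∀ σ : Matrix α α ℂ, Φ0 σ = σ.trace • P := fun σ => rfl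
  have hPpsd : P.PosSemidef := stdBasis_psd b0
  have hPtr : P.trace = 1 := stdBasis_trace b0
  have hch : ∀ (p : β) (i : α) (q : β) (j : α), choi Φ0 ((p, i) : β × α) (q, j)
      = (if i = j then 1 else 0) * (if b0 = p ∧ b0 = q then (1:ℂ) else 0) := by
    intro p i q j
    have h1 : (Matrix.single i j (1:ℂ)).trace = if i = j then 1 else 0 := by
      simp [Matrix.trace, Matrix.diag, Matrix.single, ite_and, Finset.sum_ite_eq,
        eq_comm]
    have h2 : P p q = if b0 = p ∧ b0 = q then (1:ℂ) else 0 := by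
      simp [hPdef, Matrix.single]
    show ((Matrix.single i j (1:ℂ)).trace • P) p q = _
    rw [Matrix.smul_apply, smul_eq_mul, h1, h2]
  have hΦ0ch : IsChannel Φ0 := by
    constructor
    · refine Matrix.PosSemidef.of_dotProduct_mulVec_nonneg ?_ ?_
      · ext ⟨p, i⟩ ⟨q, j⟩
        rw [Matrix.conjTranspose_apply, hch, hch]
        by_cases h1 : i = j <;> by_cases h2 : b0 = p <;> by_cases h3 : b0 = q <;>
          simp [h1, h2, h3, eq_comm, and_comm]
      · intro y
        have key : dotProduct (star y) (choi Φ0 *ᵥ y)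
            = ∑ i, star (y ((b0, i) : β × α)) * y (b0, i) := by
          simp only [dotProduct, Matrix.mulVec, Fintype.sum_prod_type, Pi.star_apply,
            hch, ite_mul, mul_ite, one_mul, zero_mul, mul_zero, mul_one, ite_and,
            Finset.sum_ite_eq, Finset.sum_ite_eq', Finset.sum_ite_irrel, Finset.sum_const_zero,
            Finset.mul_sum, RCLike.star_def]
          simp
        rw [key]
        exact Finset.sum_nonneg fun i _ => star_mul_self_nonneg _
    · intro ρ
      rw [hΦ0app, Matrix.trace_smul, hPtr, smul_eq_mul, mul_one]
  have hΦ0DI : IsDI Φ0 := by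
    refine LinearMap.ext fun σ => ?_
    simp only [LinearMap.comp_apply]
    rw [hΦ0app, hΦ0app, trace_deph]
  have hρ0st : IsState ρ0 := ⟨stdBasis_psd a0, stdBasis_trace a0⟩
  have hphase : (phaseCh φ ρ0 : Matrix α α ℂ) = ρ0 := by
    ext i j
    by_cases h : i = a0 ∧ j = a0
    · obtain ⟨rfl, rfl⟩ := h
      simp [phaseCh, Matrix.single, sub_self]
    · have hz : ρ0 i j = 0 := by
        simp only [hρ0def, Matrix.single, Matrix.of_apply, ite_eq_right_iff, and_imp]
        intro h1 h2
        exact absurd ⟨h1.symm, h2.symm⟩ h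
      simp [phaseCh, hz]
  have hdiff : diffOp lam φ ρ0 = ((lam - (1 - lam) : ℝ) : ℂ) • ρ0 := by
    rw [diffOp]
    simp only [LinearMap.sub_apply, LinearMap.smul_apply, LinearMap.id_apply, hphase]
    rw [← sub_smul]
    norm_num
  have hmat0 : Θ (Φ0 (diffOp lam φ ρ0)) = ((lam - (1 - lam) : ℝ) : ℂ) • Θ P := by
    rw [hdiff, _root_.map_smul, hΦ0app, hρ0st.2, one_smul, _root_.map_smul]
  have hΘP : (Θ P).PosSemidef := channel_psd Θ hΘ.1 hPpsd
  have hΘPtr : (Θ P).trace = 1 := by rw [hΘ.2, hPtr]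
  have hval : traceNorm (deph (Θ (Φ0 (diffOp lam φ ρ0)))) = |lam - (1 - lam)| := by
    rw [hmat0, deph_eq]
    have : (Matrix.diagonal fun i => (((lam - (1 - lam) : ℝ) : ℂ) • Θ P) i i)
        = Matrix.diagonal fun i => ((lam - (1 - lam) : ℝ) : ℂ) * Θ P i i := by
      congr 1
    rw [this, traceNorm_diagonal]
    calc ∑ i, ‖((lam - (1 - lam) : ℝ) : ℂ) * Θ P i i‖
        = ∑ i, |lam - (1 - lam)| * (Θ P i i).re := by
          refine Finset.sum_congr rfl fun i _ => ?_
          rw [norm_mul, Complex.norm_real, Real.norm_eq_abs, psd_diag_re hΘP]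
      _ = |lam - (1 - lam)| * ((Θ P).trace).re := by
          rw [← Finset.mul_sum]
          simp [Matrix.trace, Matrix.diag, Complex.re_sum]
      _ = |lam - (1 - lam)| := by rw [hΘPtr]; norm_num
  have hmem : |lam - (1 - lam)| ∈ S := by
    refine ⟨Φ0, ρ0, hΦ0ch, hΦ0DI, hρ0st, hval.symm⟩
  have hle : |lam - (1 - lam)| ≤ sSup S :=
    le_csSup ⟨1, fun x hx => hub x hx⟩ hmem
  rw [Mpre]
  rw [sub_nonneg]
  exact hle
end

section
/- The set of bipartite operators of the form X_{AB} = (id^A ⊗ Θ^{B←A}) Σ_{i,j} ρ_{i,j} |ii⟩⟨jj|_{AA}, where Θ ranges over CPTP maps and ρ over quantum states, equals the set of operators Y_{AB} ≥ 0 whose partial trace over B is a diagonal state: tr_B Y = Δ(σ_A) for some state σ_A. -/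
open Matrix Complex
open scoped ComplexOrder

open scoped MatrixOrder Matrix.Norms.L2Operator in
private lemma psd_eq_ct_mul_self {n : Type*} [Fintype n] [DecidableEq n] {M : Matrix n n ℂ}
    (h : M.PosSemidef) : ∃ B : Matrix n n ℂ, M = Bᴴ * B := by
  obtain ⟨B, hB⟩ := CStarAlgebra.nonneg_iff_eq_star_mul_self.mp h.nonneg
  exact ⟨B, hB⟩

private lemma diag_nonneg' {n : Type*} [Fintype n] [DecidableEq n] {M : Matrix n n ℂ}
    (h : M.PosSemidef) (i : n) : 0 ≤ M i i := by
  simpa [Matrix.mulVec, dotProduct, Pi.single_apply, Finset.mul_sum] using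
    h.dotProduct_mulVec_nonneg (Pi.single i 1)

private lemma psd_row_col_zero {n : Type*} [Fintype n] [DecidableEq n] {M : Matrix n n ℂ}
    (h : M.PosSemidef) {p : n} (hp : M p p = 0) (q : n) : M p q = 0 ∧ M q p = 0 := by
  obtain ⟨G, rfl⟩ := psd_eq_ct_mul_self h
  have h0 : (∑ r, (Complex.normSq (G r p) : ℂ)) = 0 := by
    rw [← hp, Matrix.mul_apply]
    refine Finset.sum_congr rfl fun r _ => ?_
    rw [Matrix.conjTranspose_apply, Complex.normSq_eq_conj_mul_self]
    rfl
  have h1 : (∑ r, Complex.normSq (G r p)) = 0 := by exact_mod_cast h0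
  have hG : ∀ r, G r p = 0 := by
    intro r
    have := (Finset.sum_eq_zero_iff_of_nonneg (fun r _ => Complex.normSq_nonneg (G r p))).mp h1
      r (Finset.mem_univ r)
    exact Complex.normSq_eq_zero.mp this
  constructor <;>
    · rw [Matrix.mul_apply]
      refine Finset.sum_eq_zero fun r _ => ?_
      simp [Matrix.conjTranspose_apply, hG r]


/-- characterization of the operators `(id ⊗ Θ) Σ ρ_{ij} |ii⟩⟨jj|` for a
channel `Θ` and a state `ρ`: they are exactly the PSD operators whose partial trace over `B`
is a diagonal state. -/
theorem channel_state_set_eq {A B : Type*} [Fintype A] [DecidableEq A] [Nonempty A]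
    [Fintype B] [DecidableEq B] [Nonempty B] :
    {X : Matrix (A × B) (A × B) ℂ | ∃ (Θ : SO A B) (ρ : Matrix A A ℂ),
        IsChannel Θ ∧ IsState ρ ∧
        X = Matrix.of fun p q =>
          ρ p.1 q.1 * Θ (Matrix.single p.1 q.1 1) p.2 q.2}
      = {Y : Matrix (A × B) (A × B) ℂ | Y.PosSemidef ∧ ∃ σ : Matrix A A ℂ, IsState σ ∧
          (Matrix.of fun i j : A => ∑ b, Y (i, b) (j, b)) = deph σ} := by
  classical
  ext Y
  constructor
  · rintro ⟨Θ, ρ, hΘ, hρ, rfl⟩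
    refine ⟨?_, ρ, hρ, ?_⟩
    · -- PSD of the constructed operator
      obtain ⟨W, hW⟩ := psd_eq_ct_mul_self hρ.1
      obtain ⟨V, hV⟩ := psd_eq_ct_mul_self hΘ.1
      set U : Matrix (A × (B × A)) (A × B) ℂ :=
        Matrix.of fun rs p => W rs.1 p.1 * V rs.2 (p.2, p.1) with hU
      have hXU : (Matrix.of fun p q : A × B =>
          ρ p.1 q.1 * Θ (Matrix.single p.1 q.1 1) p.2 q.2) = Uᴴ * U := by
        ext ⟨i, b⟩ ⟨j, b'⟩
        have h1 : ρ i j = ∑ r, (starRingEnd ℂ) (W r i) * W r j := by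
          rw [hW, Matrix.mul_apply]
          simp [Matrix.conjTranspose_apply]
        have h2 : Θ (Matrix.single i j 1) b b'
            = ∑ s, (starRingEnd ℂ) (V s (b, i)) * V s (b', j) := by
          have h0 : Θ (Matrix.single i j 1) b b' = choi Θ (b, i) (b', j) := rfl
          rw [h0, hV, Matrix.mul_apply]
          simp [Matrix.conjTranspose_apply]
        rw [Matrix.mul_apply, Fintype.sum_prod_type]
        simp only [Matrix.of_apply, Matrix.conjTranspose_apply, hU]
        rw [h1, h2, Finset.sum_mul_sum]
        refine Finset.sum_congr rfl fun r _ => Finset.sum_congr rfl fun s _ => ?_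
        simp only [Matrix.of_apply, star_mul', Complex.star_def]
        ring
      rw [hXU]
      exact Matrix.posSemidef_conjTranspose_mul_self U
    · -- partial trace is deph ρ
      ext i j
      have htr : (Θ (Matrix.single i j 1)).trace = if i = j then 1 else 0 := by
        rw [hΘ.2]
        by_cases h : i = j
        · subst h
          simp [Matrix.trace, Matrix.diag, Matrix.single]
        · rw [if_neg h]
          rw [Matrix.trace]
          refine Finset.sum_eq_zero fun k _ => ?_
          simp only [Matrix.diag, Matrix.single, Matrix.of_apply]
          rw [if_neg]
          rintro ⟨rfl, rfl⟩
          exact h rfl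
      show (∑ b, ρ i j * Θ (Matrix.single i j 1) b b) = deph ρ i j
      rw [← Finset.mul_sum]
      have : (∑ b, Θ (Matrix.single i j 1) b b)
          = (Θ (Matrix.single i j 1)).trace := rfl
      rw [this, htr]
      show _ = if i = j then ρ i j else 0
      by_cases h : i = j <;> simp [h]
  · rintro ⟨hYpsd, σ, hσ, hptr⟩
    have hptr' : ∀ i j, (∑ b, Y (i, b) (j, b)) = if i = j then σ i j else 0 := by
      intro i j
      have := congrFun (congrFun hptr i) j
      simpa [deph] using this
    set s : A → ℝ := fun i => (σ i i).re with hs_def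
    have hs0 : ∀ i, 0 ≤ s i ∧ σ i i = (s i : ℂ) := by
      intro i
      have h := diag_nonneg' hσ.1 i
      rw [Complex.nonneg_iff] at h
      refine ⟨h.1, ?_⟩
      apply Complex.ext
      · simp [hs_def]
      · simp [hs_def, ← h.2]
    set v : A → ℝ := fun i => Real.sqrt (s i) with hv_def
    have hvv : ∀ i, v i * v i = s i := fun i => Real.mul_self_sqrt (hs0 i).1
    have hv0 : ∀ i, ¬ 0 < s i → v i = 0 := by
      intro i hi
      have : s i = 0 := le_antisymm (not_lt.mp hi) (hs0 i).1
      simp [hv_def, this]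
    set d : A → ℝ := fun i => if 0 < s i then (Real.sqrt (s i))⁻¹ else 0 with hd_def
    have hvd : ∀ i, 0 < s i → v i * d i = 1 := by
      intro i hi
      rw [hv_def, hd_def]
      simp only [if_pos hi]
      exact mul_inv_cancel₀ (Real.sqrt_ne_zero'.mpr hi)
    have hdd : ∀ i, 0 < s i → d i * d i = (s i)⁻¹ := by
      intro i hi
      rw [hd_def]
      simp only [if_pos hi]
      rw [← mul_inv, Real.mul_self_sqrt (hs0 i).1]
    have hYzero : ∀ i, ¬ 0 < s i → ∀ p b, Y (i, b) p = 0 ∧ Y p (i, b) = 0 := by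
      intro i hi p b
      have hsi : s i = 0 := le_antisymm (not_lt.mp hi) (hs0 i).1
      have hsum : (∑ b', Y (i, b') (i, b')) = 0 := by
        rw [hptr' i i, if_pos rfl, (hs0 i).2, hsi, Complex.ofReal_zero]
      have hdiag : Y (i, b) (i, b) = 0 := by
        have hnn : ∀ b' ∈ Finset.univ, (0 : ℂ) ≤ Y (i, b') (i, b') :=
          fun b' _ => diag_nonneg' hYpsd (i, b')
        exact (Finset.sum_eq_zero_iff_of_nonneg hnn).mp hsum b (Finset.mem_univ b)
      exact psd_row_col_zero hYpsd hdiag p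
    set C : Matrix (B × A) (B × A) ℂ := Matrix.of fun p q =>
      Y (p.2, p.1) (q.2, q.1) * ((d p.2 : ℂ) * (d q.2 : ℂ))
        + (if p = q ∧ ¬ 0 < s p.2 then ((Fintype.card B : ℂ))⁻¹ else 0) with hC_def
    have hCapp : ∀ b i b' j, C (b, i) (b', j) =
        Y (i, b) (j, b') * ((d i : ℂ) * (d j : ℂ))
        + (if (b, i) = (b', j) ∧ ¬ 0 < s i then ((Fintype.card B : ℂ))⁻¹ else 0) := by
      intro b i b' j; rfl
    have hkey : ∀ i j, (∑ b, C (b, i) (b, j)) = if i = j then 1 else 0 := by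
      intro i j
      by_cases hij : i = j
      · subst hij
        rw [if_pos rfl]
        by_cases hi : 0 < s i
        · have he : ∀ b : B, C (b, i) (b, i) = Y (i, b) (i, b) * ((d i : ℂ) * (d i : ℂ)) := by
            intro b
            rw [hCapp, if_neg (fun h => h.2 hi), add_zero]
          rw [Finset.sum_congr rfl fun b _ => he b, ← Finset.sum_mul, hptr' i i, if_pos rfl,
            (hs0 i).2, ← Complex.ofReal_mul, hdd i hi, ← Complex.ofReal_mul,
            mul_inv_cancel₀ (ne_of_gt hi), Complex.ofReal_one]
        · have he : ∀ b : B, C (b, i) (b, i) = ((Fintype.card B : ℂ))⁻¹ := by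
            intro b
            rw [hCapp, if_pos ⟨rfl, hi⟩]
            have : (d i : ℝ) = 0 := by rw [hd_def]; simp [hi]
            rw [this]
            simp
          rw [Finset.sum_congr rfl fun b _ => he b, Finset.sum_const, Finset.card_univ,
            nsmul_eq_mul, mul_inv_cancel₀]
          exact Nat.cast_ne_zero.mpr Fintype.card_ne_zero
      · rw [if_neg hij]
        have he : ∀ b : B, C (b, i) (b, j) = Y (i, b) (j, b) * ((d i : ℂ) * (d j : ℂ)) := by
          intro b
          rw [hCapp, if_neg, add_zero]
          rintro ⟨h1, -⟩
          exact hij (congrArg Prod.snd h1)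
        rw [Finset.sum_congr rfl fun b _ => he b, ← Finset.sum_mul, hptr' i j, if_neg hij,
          zero_mul]
    have hCpsd : C.PosSemidef := by
      refine Matrix.PosSemidef.of_dotProduct_mulVec_nonneg ?_ ?_
      · ext ⟨b, i⟩ ⟨b', j⟩
        rw [Matrix.conjTranspose_apply]
        rw [hCapp, hCapp]
        have h1 : star (Y (j, b') (i, b)) = Y (i, b) (j, b') := by
          conv_rhs => rw [← hYpsd.1]
          rw [Matrix.conjTranspose_apply]
        by_cases hpq : (b, i) = (b', j)
        · rw [Prod.mk.injEq] at hpq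
          obtain ⟨rfl, rfl⟩ := hpq
          rw [star_add, star_mul', h1, star_mul']
          by_cases hd : ¬ 0 < s i
          · rw [if_pos (⟨rfl, hd⟩ : (b, i) = (b, i) ∧ ¬ 0 < s i), star_inv₀, star_natCast]
            simp only [Complex.star_def, Complex.conj_ofReal]
          · rw [if_neg (show ¬((b, i) = (b, i) ∧ ¬ 0 < s i) from fun h => hd h.2), star_zero]
            simp only [Complex.star_def, Complex.conj_ofReal]
        · have hpq' : ¬ (b', j) = (b, i) := fun h => hpq h.symm
          rw [if_neg (fun h => hpq' h.1), if_neg (fun h => hpq h.1), add_zero, add_zero,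
            star_mul', h1, star_mul']
          simp only [Complex.star_def, Complex.conj_ofReal]
          ring
      · intro x
        have expand : ∀ (n : Type _) (_ : Fintype n) (M : Matrix n n ℂ) (z : n → ℂ),
            star z ⬝ᵥ M *ᵥ z = ∑ p, ∑ q, (starRingEnd ℂ) (z p) * (M p q * z q) := by
          intro n _ M z
          simp [dotProduct, Matrix.mulVec, Finset.mul_sum, Complex.star_def]
        rw [expand _ _ C x]
        have hsplit : (∑ p, ∑ q, (starRingEnd ℂ) (x p) * (C p q * x q))
            = (∑ p, ∑ q, (starRingEnd ℂ) (x p) *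
                (Y (p.2, p.1) (q.2, q.1) * ((d p.2 : ℂ) * (d q.2 : ℂ)) * x q))
              + ∑ p, ∑ q, (starRingEnd ℂ) (x p) *
                ((if p = q ∧ ¬ 0 < s p.2 then ((Fintype.card B : ℂ))⁻¹ else 0) * x q) := by
          rw [← Finset.sum_add_distrib]
          refine Finset.sum_congr rfl fun p _ => ?_
          rw [← Finset.sum_add_distrib]
          refine Finset.sum_congr rfl fun q _ => ?_
          rw [hC_def]
          simp only [Matrix.of_apply]
          ring
        rw [hsplit]
        have hS1 : (0:ℂ) ≤ ∑ p, ∑ q, (starRingEnd ℂ) (x p) *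
            (Y (p.2, p.1) (q.2, q.1) * ((d p.2 : ℂ) * (d q.2 : ℂ)) * x q) := by
          set y : A × B → ℂ := fun u => (d u.1 : ℂ) * x (u.2, u.1) with hy
          have hq := hYpsd.dotProduct_mulVec_nonneg y
          rw [expand _ _ Y y] at hq
          refine le_of_le_of_eq hq (Eq.symm ?_)
          refine Fintype.sum_equiv (Equiv.prodComm B A) _ _ fun p => ?_
          refine Fintype.sum_equiv (Equiv.prodComm B A) _ _ fun q => ?_
          obtain ⟨b1, a1⟩ := p
          obtain ⟨b2, a2⟩ := q
          simp only [Equiv.prodComm_apply, hy, Prod.swap_prod_mk, _root_.map_mul,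
            Complex.conj_ofReal]
          ring
        have hS2 : (0:ℂ) ≤ ∑ p, ∑ q, (starRingEnd ℂ) (x p) *
            ((if p = q ∧ ¬ 0 < s p.2 then ((Fintype.card B : ℂ))⁻¹ else 0) * x q) := by
          refine Finset.sum_nonneg fun p _ => Finset.sum_nonneg fun q _ => ?_
          by_cases h : p = q ∧ ¬ 0 < s p.2
          · obtain ⟨rfl, hdead⟩ := h
            rw [if_pos (⟨rfl, hdead⟩ : p = p ∧ ¬ 0 < s p.2)]
            have h1 : (starRingEnd ℂ) (x p) * (((Fintype.card B : ℂ))⁻¹ * x p)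
                = Complex.ofReal ((Fintype.card B : ℝ))⁻¹ *
                  Complex.ofReal (Complex.normSq (x p)) := by
              rw [Complex.normSq_eq_conj_mul_self]
              push_cast
              ring
            rw [h1]
            exact mul_nonneg (Complex.zero_le_real.mpr (by positivity))
              (Complex.zero_le_real.mpr (Complex.normSq_nonneg _))
          · rw [if_neg h]
            simp
        exact add_nonneg hS1 hS2
    obtain ⟨Θ, hΘdef⟩ : ∃ Θ : SO A B, ∀ M b b',
        Θ M b b' = ∑ i, ∑ j, M i j * C (b, i) (b', j) := by
      refine ⟨⟨⟨fun M => Matrix.of fun b b' => ∑ i, ∑ j, M i j * C (b, i) (b', j), ?_⟩, ?_⟩,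
        fun M b b' => rfl⟩
      · intro x y
        ext b b'
        simp [Matrix.add_apply, add_mul, Finset.sum_add_distrib]
      · intro c x
        ext b b'
        simp only [Matrix.of_apply, Matrix.smul_apply, smul_eq_mul, RingHom.id_apply,
          Finset.mul_sum]
        exact Finset.sum_congr rfl fun i _ => Finset.sum_congr rfl fun j _ => by ring
    have hchoi : choi Θ = C := by
      ext ⟨b, i⟩ ⟨b', j⟩
      show Θ (Matrix.single i j 1) b b' = C (b, i) (b', j)
      rw [hΘdef]
      rw [Finset.sum_eq_single i]
      · rw [Finset.sum_eq_single j]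
        · simp [Matrix.single]
        · intro j' _ hj'
          simp [Matrix.single, Ne.symm hj']
        · intro h
          exact absurd (Finset.mem_univ j) h
      · intro i' _ hi'
        refine Finset.sum_eq_zero fun j' _ => ?_
        simp [Matrix.single, Ne.symm hi']
      · intro h
        exact absurd (Finset.mem_univ i) h
    set ρ : Matrix A A ℂ := Matrix.of fun i j => ((v i : ℂ)) * ((v j : ℂ)) with hρ_def
    have hρpsd : ρ.PosSemidef := by
      refine Matrix.PosSemidef.of_dotProduct_mulVec_nonneg ?_ ?_
      · ext i j
        rw [Matrix.conjTranspose_apply]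
        show star (((v j : ℂ)) * ((v i : ℂ))) = _
        rw [star_mul']
        simp [Complex.star_def, Complex.conj_ofReal, mul_comm, hρ_def]
      · intro x
        have h1 : star x ⬝ᵥ ρ *ᵥ x
            = (starRingEnd ℂ) (∑ i, (v i : ℂ) * x i) * (∑ j, (v j : ℂ) * x j) := by
          rw [map_sum, Finset.sum_mul_sum]
          simp only [dotProduct, Matrix.mulVec, Pi.star_apply, Complex.star_def,
            Finset.mul_sum]
          refine Finset.sum_congr rfl fun i _ => Finset.sum_congr rfl fun j _ => ?_
          simp only [hρ_def, Matrix.of_apply, _root_.map_mul, Complex.conj_ofReal]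
          ring
        rw [h1, ← Complex.normSq_eq_conj_mul_self]
        exact Complex.zero_le_real.mpr (Complex.normSq_nonneg _)
    refine ⟨Θ, ρ, ⟨?_, ?_⟩, ⟨hρpsd, ?_⟩, ?_⟩
    · rw [hchoi]; exact hCpsd
    · intro M
      have h1 : (Θ M).trace = ∑ i, ∑ j, M i j * ∑ b, C (b, i) (b, j) := by
        rw [Matrix.trace]
        simp only [Matrix.diag, hΘdef]
        rw [Finset.sum_comm]
        refine Finset.sum_congr rfl fun i _ => ?_
        rw [Finset.sum_comm]
        refine Finset.sum_congr rfl fun j _ => ?_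
        rw [Finset.mul_sum]
      rw [h1]
      simp only [hkey, mul_ite, mul_one, mul_zero]
      rw [Matrix.trace]
      simp [Matrix.diag, Finset.sum_ite_eq]
    · -- trace ρ = 1
      rw [Matrix.trace]
      have he : ∀ i : A, ρ.diag i = σ i i := by
        intro i
        show ((v i : ℂ)) * ((v i : ℂ)) = σ i i
        rw [← Complex.ofReal_mul, hvv i, (hs0 i).2]
      rw [Finset.sum_congr rfl fun i _ => he i]
      have : (∑ i, σ i i) = σ.trace := rfl
      rw [this, hσ.2]
    · -- Y equals the constructed operator
      ext ⟨i, b⟩ ⟨j, b'⟩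
      have hθE : Θ (Matrix.single i j 1) b b' = C (b, i) (b', j) := by
        have h := congrFun (congrFun hchoi (b, i)) (b', j)
        exact h
      show Y (i, b) (j, b') = ρ i j * Θ (Matrix.single i j 1) b b'
      rw [hθE, hρ_def]
      simp only [Matrix.of_apply]
      rw [hCapp]
      by_cases hi : 0 < s i
      · by_cases hj : 0 < s j
        · rw [if_neg (fun h => h.2 hi), add_zero]
          have e1 : ((v i : ℂ)) * ((d i : ℂ)) = 1 := by
            rw [← Complex.ofReal_mul, hvd i hi, Complex.ofReal_one]
          have e2 : ((v j : ℂ)) * ((d j : ℂ)) = 1 := by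
            rw [← Complex.ofReal_mul, hvd j hj, Complex.ofReal_one]
          have : (v i : ℂ) * (v j : ℂ) * (Y (i, b) (j, b') * ((d i : ℂ) * (d j : ℂ)))
              = ((v i : ℂ) * (d i : ℂ)) * ((v j : ℂ) * (d j : ℂ)) * Y (i, b) (j, b') := by
            ring
          rw [this, e1, e2, one_mul, one_mul]
        · rw [(hYzero j hj (i, b) b').2]
          rw [hv0 j hj]
          simp
      · rw [(hYzero i hi (j, b') b).1]
        rw [hv0 i hi]
        simp
end
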